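/- Let G be a finite multigraph and {u,w} a pair of distinct vertices with m_G(u,w) ≥ 1. Let G̃ be the finite multigraph obtained from G by decreasing m(u,w) by one and adding two new vertices x and y together with three new simple edges {u,x}, {x,y} and {y,w} (that is, one edge joining u and w is subdivided twice). Then ind(G̃) ≥ ind(G) + 1. -/

import Mathlib

/-- A finite multigraph: a finite vertex set together with a multiplicity
function counting the parallel edges joining two vertices. -/
structure Multigraph (α : Type*) where
  verts : Finset α
  m : α → α → ℕ

namespace Multigraph

variable {α : Type*} [DecidableEq α]

/-- The invariants of a finite multigraph: the multiplicity function is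
symmetric, loopless, and supported on pairs of vertices. -/
def IsGood (G : Multigraph α) : Prop :=
  (∀ u w, G.m u w = G.m w u) ∧ (∀ u, G.m u u = 0) ∧
    (∀ u w, G.m u w ≠ 0 → u ∈ G.verts ∧ w ∈ G.verts)

/-- Star-contraction `G/v`: merge `v` and all of its neighbours into one new
vertex (kept with the name `v`), delete every edge both of whose endpoints lie
in the merged set, and keep all other edges, with endpoints lying in the merged
set redirected to the new vertex (multiplicities of pairs that become
identified are added). -/
def contractStar (G : Multigraph α) (v : α) : Multigraph α where
  verts := insert v (G.verts.filter fun u => u ≠ v ∧ G.m v u = 0)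
  m := fun u w =>
    if u = w then 0
    else if u = v then
      (if G.m v w ≠ 0 then 0
       else ∑ s ∈ G.verts.filter (fun s => G.m v s ≠ 0), G.m s w)
    else if w = v then
      (if G.m v u ≠ 0 then 0
       else ∑ s ∈ G.verts.filter (fun s => G.m v s ≠ 0), G.m s u)
    else if G.m v u ≠ 0 ∨ G.m v w ≠ 0 then 0
    else G.m u w

/-- The simple edges of `G`: ordered pairs of distinct vertices joined by
exactly one edge. -/
def simpleEdges (G : Multigraph α) : Finset (α × α) :=
  (G.verts ×ˢ G.verts).filter fun p => p.1 ≠ p.2 ∧ G.m p.1 p.2 = 1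

/-- Fuel-based recursion computing the Murasugi–Przytycki index; fuel
`G.verts.card` suffices, since a star-contraction at an endpoint of a simple
edge removes at least one vertex. -/
def indAux : ℕ → Multigraph α → ℕ
  | 0, _ => 0
  | n + 1, G =>
      G.simpleEdges.sup fun p =>
        1 + max (indAux n (G.contractStar p.1)) (indAux n (G.contractStar p.2))

/-- The Murasugi–Przytycki index: `ind G = 0` if `G` has no simple edge, and
otherwise `ind G` is the maximum, over all simple edges `{v₁, v₂}` of `G`, of
`1 + max (ind (G/v₁)) (ind (G/v₂))`. -/
def ind (G : Multigraph α) : ℕ := indAux G.verts.card G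

-- ### auxiliary theory

lemma indAux_succ (n : ℕ) (G : Multigraph α) :
    indAux (n + 1) G = G.simpleEdges.sup fun p =>
      1 + max (indAux n (G.contractStar p.1)) (indAux n (G.contractStar p.2)) := rfl

lemma indAux_mono_succ : ∀ (n : ℕ) (G : Multigraph α), indAux n G ≤ indAux (n + 1) G := by
  intro n
  induction n with
  | zero => intro G; exact Nat.zero_le _
  | succ n ih =>
    intro G
    rw [indAux, indAux]
    refine Finset.sup_le fun p hp => ?_
    refine le_trans ?_ (Finset.le_sup hp)
    have h1 := ih (G.contractStar p.1)
    have h2 := ih (G.contractStar p.2)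
    omega

lemma indAux_mono {n n' : ℕ} (h : n ≤ n') (G : Multigraph α) : indAux n G ≤ indAux n' G := by
  induction h with
  | refl => exact le_refl _
  | step h ih => exact le_trans ih (indAux_mono_succ _ _)

def map (e : α ≃ α) (G : Multigraph α) : Multigraph α where
  verts := G.verts.image e
  m := fun a b => G.m (e.symm a) (e.symm b)

lemma contractStar_map (e : α ≃ α) (G : Multigraph α) (v : α) :
    (G.map e).contractStar (e v) = (G.contractStar v).map e := by
  have hfilt : ∀ (p : α → Prop) [DecidablePred p],
      (G.verts.image e).filter p = (G.verts.filter fun z => p (e z)).image e := by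
    intro p _
    rw [Finset.filter_image]
  refine congrArg₂ Multigraph.mk ?_ ?_
  · show insert (e v) ((G.verts.image e).filter _) =
      (insert v (G.verts.filter _)).image e
    rw [Finset.image_insert, hfilt]
    have hset : (G.verts.filter fun z => e z ≠ e v ∧ (G.map e).m (e v) (e z) = 0)
        = G.verts.filter fun z => z ≠ v ∧ G.m v z = 0 := by
      apply Finset.filter_congr
      intro z hz
      simp [map, e.symm_apply_apply, e.apply_eq_iff_eq]
    rw [hset]
  · funext a b
    have hab : (a = b) = (e.symm a = e.symm b) := by
      apply propext; constructor <;> intro h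
      · rw [h]
      · exact e.symm.injective h
    have hav : (a = e v) = (e.symm a = v) := by rw [Equiv.symm_apply_eq]
    have hbv : (b = e v) = (e.symm b = v) := by rw [Equiv.symm_apply_eq]
    have hsum : ∀ c : α,
        ∑ s ∈ (G.verts.image e).filter (fun s => G.m v (e.symm s) ≠ 0), G.m (e.symm s) (e.symm c)
        = ∑ s ∈ G.verts.filter (fun s => G.m v s ≠ 0), G.m s (e.symm c) := by
      intro c
      rw [Finset.filter_image, Finset.sum_image (fun a _ b _ h => e.injective h)]
      apply Finset.sum_congr
      · apply Finset.filter_congr; intro z hz; simp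
      · intro z hz; simp
    show (if a = b then 0 else _) = (G.contractStar v).m (e.symm a) (e.symm b)
    simp only [contractStar, map, e.symm_apply_apply, hab, hav, hbv, hsum]


lemma simpleEdges_map (e : α ≃ α) (G : Multigraph α) :
    (G.map e).simpleEdges = G.simpleEdges.image (Prod.map e e) := by
  rw [Finset.ext_iff]; rintro ⟨a, b⟩
  simp only [simpleEdges, Finset.mem_filter, Finset.mem_product, Finset.mem_image,
    Finset.mem_image, Prod.exists, Prod.map_apply]
  simp only [map, Finset.mem_image]
  constructor
  · rintro ⟨⟨⟨a', ha', rfl⟩, ⟨b', hb', rfl⟩⟩, hne, hm1⟩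
    exact ⟨a', b', ⟨⟨ha', hb'⟩, fun h => hne (by rw [h]),
      by simpa using hm1⟩, rfl⟩
  · rintro ⟨a', b', ⟨⟨ha', hb'⟩, hne, hm1⟩, h⟩
    obtain ⟨rfl, rfl⟩ := Prod.mk.injEq .. ▸ h
    refine ⟨⟨⟨a', ha', rfl⟩, ⟨b', hb', rfl⟩⟩, fun h => hne (e.injective h), by simpa using hm1⟩

lemma indAux_map (e : α ≃ α) : ∀ (n : ℕ) (G : Multigraph α),
    indAux n (G.map e) = indAux n G := by
  intro n
  induction n with
  | zero => intro G; rfl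
  | succ n ih =>
    intro G
    rw [indAux, indAux, simpleEdges_map, Finset.sup_image]
    apply Finset.sup_congr rfl
    rintro ⟨a, b⟩ hp
    simp only [Function.comp_apply, Prod.map_apply]
    rw [contractStar_map, contractStar_map, ih, ih]

def Agree (G H : Multigraph α) : Prop :=
  G.verts = H.verts ∧ ∀ a ∈ G.verts, ∀ b ∈ G.verts, G.m a b = H.m a b

lemma simpleEdges_agree {G H : Multigraph α} (h : Agree G H) :
    G.simpleEdges = H.simpleEdges := by
  obtain ⟨hv, hm⟩ := h
  unfold simpleEdges
  rw [← hv]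
  apply Finset.filter_congr
  rintro ⟨a, b⟩ hab
  rw [Finset.mem_product] at hab
  rw [hm a hab.1 b hab.2]

lemma contractStar_agree {G H : Multigraph α} (h : Agree G H) {v : α} (hv : v ∈ G.verts) :
    Agree (G.contractStar v) (H.contractStar v) := by
  obtain ⟨hvs, hm⟩ := h
  have hfilt : (G.verts.filter fun z => z ≠ v ∧ G.m v z = 0)
      = H.verts.filter fun z => z ≠ v ∧ H.m v z = 0 := by
    rw [← hvs]
    apply Finset.filter_congr
    intro z hz
    rw [hm v hv z hz]
  have hnbr : (G.verts.filter fun s => G.m v s ≠ 0)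
      = H.verts.filter fun s => H.m v s ≠ 0 := by
    rw [← hvs]
    apply Finset.filter_congr
    intro z hz
    rw [hm v hv z hz]
  constructor
  · show insert v _ = insert v _
    rw [hfilt]
  · intro a ha b hb
    have hsub : (G.contractStar v).verts ⊆ G.verts := by
      intro z hz
      simp only [contractStar, Finset.mem_insert, Finset.mem_filter] at hz
      rcases hz with rfl | hz
      · exact hv
      · exact hz.1
    have ha' : a ∈ G.verts := hsub ha
    have hb' : b ∈ G.verts := hsub hb
    have hsum : ∀ c ∈ G.verts,
        ∑ s ∈ G.verts.filter (fun s => G.m v s ≠ 0), G.m s c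
        = ∑ s ∈ H.verts.filter (fun s => H.m v s ≠ 0), H.m s c := by
      intro c hc
      rw [← hnbr]
      apply Finset.sum_congr rfl
      intro s hs
      rw [Finset.mem_filter] at hs
      exact hm s hs.1 c hc
    show (if a = b then 0 else _) = (if a = b then 0 else _)
    rw [hm v hv a ha', hm v hv b hb', hm a ha' b hb', hsum a ha', hsum b hb']

lemma indAux_agree : ∀ (n : ℕ) {G H : Multigraph α}, Agree G H →
    indAux n G = indAux n H := by
  intro n
  induction n with
  | zero => intro G H _; rfl
  | succ n ih =>
    intro G H h
    rw [indAux, indAux, ← simpleEdges_agree h]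
    apply Finset.sup_congr rfl
    intro p hp
    have hp' : p.1 ∈ G.verts ∧ p.2 ∈ G.verts := by
      simp only [simpleEdges, Finset.mem_filter, Finset.mem_product] at hp
      exact hp.1
    rw [ih (contractStar_agree h hp'.1), ih (contractStar_agree h hp'.2)]

/-- Subdivide one `u`–`w` edge twice: decrease `m u w` by one, and add two new
vertices `x`, `y` together with three new simple edges `{u,x}`, `{x,y}` and
`{y,w}`. -/
def subdivide2 (G : Multigraph α) (u w x y : α) : Multigraph α where
  verts := insert x (insert y G.verts)
  m := fun a b =>
    if a = b then 0
    else if (a = u ∧ b = w) ∨ (a = w ∧ b = u) then G.m u w - 1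
    else if (a = u ∧ b = x) ∨ (a = x ∧ b = u) then 1
    else if (a = x ∧ b = y) ∨ (a = y ∧ b = x) then 1
    else if (a = y ∧ b = w) ∨ (a = w ∧ b = y) then 1
    else if a = x ∨ b = x ∨ a = y ∨ b = y then 0
    else G.m a b

end Multigraph

/-- If `G̃` is obtained from a finite multigraph `G` by subdividing twice an
edge joining `u` and `w` (using fresh vertices `x`, `y`), then
`ind G̃ ≥ ind G + 1`. -/
theorem stmt_9 {α : Type*} [DecidableEq α] (G : Multigraph α) (hG : G.IsGood)
    (u w x y : α) (huw : u ≠ w) (hu : u ∈ G.verts) (hw : w ∈ G.verts)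
    (hm : 1 ≤ G.m u w) (hxy : x ≠ y) (hx : x ∉ G.verts) (hy : y ∉ G.verts) :
    G.ind + 1 ≤ (G.subdivide2 u w x y).ind := by
  classical
  obtain ⟨hsymm, hloop, _⟩ := hG
  set T := G.subdivide2 u w x y with hT
  have hxu : x ≠ u := fun h => hx (h ▸ hu)
  have hxw : x ≠ w := fun h => hx (h ▸ hw)
  have hyu : y ≠ u := fun h => hy (h ▸ hu)
  have hyw : y ≠ w := fun h => hy (h ▸ hw)
  have huy : u ≠ y := fun h => hyu h.symm
  have hux : u ≠ x := fun h => hxu h.symm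
  have hyx : y ≠ x := fun h => hxy h.symm
  -- multiplicity facts in T
  have hTxu : T.m x u = 1 := by
    simp [hT, Multigraph.subdivide2, hxu, hxw, huw.symm]
  have hTxy : T.m x y = 1 := by
    simp [hT, Multigraph.subdivide2, hxy, hxu, hxw, hyu]
  have hTxz : ∀ z, z ≠ u → z ≠ y → T.m x z = 0 := by
    intro z hzu hzy
    rcases eq_or_ne z x with rfl | hzx
    · simp [hT, Multigraph.subdivide2]
    · simp [hT, Multigraph.subdivide2, hxu, hxw, hxy, hzu, hzy, hzx, Ne.symm hzx]
  have hTub : ∀ b, b ≠ u → b ≠ x → b ≠ y →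
      T.m u b = (if b = w then G.m u w - 1 else G.m u b) := by
    intro b hbu hbx hby
    rcases eq_or_ne b w with rfl | hbw
    · simp [hT, Multigraph.subdivide2, huw, hux, huy]
    · simp [hT, Multigraph.subdivide2, Ne.symm hbu, hbw, huw, hbu, hbx, hby, hux, huy]
  have hTyb : ∀ b, b ≠ u → b ≠ x → b ≠ y →
      T.m y b = (if b = w then 1 else 0) := by
    intro b hbu hbx hby
    rcases eq_or_ne b w with rfl | hbw
    · simp [hT, Multigraph.subdivide2, hyw, hyu, hyx]
    · simp [hT, Multigraph.subdivide2, Ne.symm hby, hyu, hyx, hyw, hbu, hbx, hby, hbw]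
  have hTab : ∀ a b, a ≠ u → a ≠ x → a ≠ y → b ≠ u → b ≠ x → b ≠ y →
      T.m a b = G.m a b := by
    intro a b hau hax hay hbu hbx hby
    rcases eq_or_ne a b with rfl | hab
    · simp [hT, Multigraph.subdivide2, hloop a]
    · simp [hT, Multigraph.subdivide2, hab, hau, hax, hay, hbu, hbx, hby]
  -- the neighbours of x in T
  have hnbr : T.verts.filter (fun s => T.m x s ≠ 0) = {u, y} := by
    ext z
    simp only [Finset.mem_filter, Finset.mem_insert, Finset.mem_singleton]
    constructor
    · rintro ⟨hz, hmz⟩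
      by_contra hc
      push_neg at hc
      exact hmz (hTxz z hc.1 hc.2)
    · rintro (rfl | rfl)
      · exact ⟨by simp [hT, Multigraph.subdivide2, hu], by rw [hTxu]; omega⟩
      · exact ⟨by simp [hT, Multigraph.subdivide2], by rw [hTxy]; omega⟩
  -- the vertex set of T / x
  have hTverts : T.verts = insert x (insert y G.verts) := rfl
  have hCverts : (T.contractStar x).verts = insert x (G.verts.erase u) := by
    show insert x (T.verts.filter fun z => z ≠ x ∧ T.m x z = 0) = _
    congr 1
    ext z
    simp only [Finset.mem_filter, hTverts, Finset.mem_insert, Finset.mem_erase]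
    constructor
    · rintro ⟨(rfl | rfl | hz), hzx, hmz⟩
      · exact absurd rfl hzx
      · exact absurd hTxy (by rw [hmz]; omega)
      · refine ⟨?_, hz⟩
        rintro rfl
        exact absurd hTxu (by rw [hmz]; omega)
    · rintro ⟨hzu, hz⟩
      exact ⟨Or.inr (Or.inr hz), fun h => hx (h ▸ hz),
        hTxz z hzu (fun h => hy (h ▸ hz))⟩
  -- the image of G under the swap
  have hIm : (G.map (Equiv.swap u x)).verts = insert x (G.verts.erase u) := by
    show G.verts.image (Equiv.swap u x) = _
    ext z
    simp only [Finset.mem_image, Finset.mem_insert, Finset.mem_erase]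
    constructor
    · rintro ⟨a, ha, rfl⟩
      rcases eq_or_ne a u with rfl | hau
      · left; rw [Equiv.swap_apply_left]
      · rcases eq_or_ne a x with rfl | hax
        · exact absurd ha hx
        · right
          rw [Equiv.swap_apply_of_ne_of_ne hau hax]
          exact ⟨hau, ha⟩
    · rintro (h | ⟨hzu, hz⟩)
      · exact ⟨u, hu, by rw [Equiv.swap_apply_left]; exact h.symm⟩
      · exact ⟨z, hz, Equiv.swap_apply_of_ne_of_ne hzu (fun h => hx (h ▸ hz))⟩
  -- the contraction T / x agrees with the relabelled G
  have hAgree : Multigraph.Agree (T.contractStar x) (G.map (Equiv.swap u x)) := by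
    constructor
    · rw [hCverts, hIm]
    · intro a ha b hb
      rw [hCverts] at ha hb
      have swx : Equiv.swap u x x = u := Equiv.swap_apply_right u x
      have swz : ∀ z, z ≠ u → z ∈ G.verts → Equiv.swap u x z = z := fun z hzu hz =>
        Equiv.swap_apply_of_ne_of_ne hzu (fun h => hx (h ▸ hz))
      have hMsum : ∀ c, c ≠ u → c ≠ x → c ≠ y →
          (∑ s ∈ T.verts.filter (fun s => T.m x s ≠ 0), T.m s c)
            = (if c = w then G.m u w else G.m u c) := by
        intro c hcu hcx hcy
        rw [hnbr, Finset.sum_insert (by simp [huy]), Finset.sum_singleton,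
          hTub c hcu hcx hcy, hTyb c hcu hcx hcy]
        split_ifs with h
        · omega
        · rfl
      show (if a = b then 0 else _) = G.m ((Equiv.swap u x).symm a) ((Equiv.swap u x).symm b)
      rw [Equiv.symm_swap]
      rw [Finset.mem_insert, Finset.mem_erase] at ha hb
      rcases ha with h | ⟨hau, ha⟩
      · rw [h]
        rcases hb with h' | ⟨hbu, hb⟩
        · rw [h']
          simp [swx, hloop u]
        · -- a = x, b old vertex
          have hbx : b ≠ x := fun hh => hx (hh ▸ hb)
          have hby : b ≠ y := fun hh => hy (hh ▸ hb)
          rw [if_neg (Ne.symm hbx), if_pos rfl,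
            if_neg (by rw [hTxz b hbu hby]; omega), hMsum b hbu hbx hby,
            swx, swz b hbu hb]
          split_ifs with hh
          · rw [hh]
          · rfl
      · have hax : a ≠ x := fun hh => hx (hh ▸ ha)
        have hay : a ≠ y := fun hh => hy (hh ▸ ha)
        rcases hb with h' | ⟨hbu, hb⟩
        · -- b = x, a old vertex
          rw [h']
          rw [if_neg hax, if_neg hax, if_pos rfl,
            if_neg (by rw [hTxz a hau hay]; omega), hMsum a hau hax hay,
            swx, swz a hau ha, hsymm a u]
          split_ifs with hh
          · rw [hh, hsymm u w]
          · rw [hsymm u a]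
        · -- both old vertices
          have hbx : b ≠ x := fun hh => hx (hh ▸ hb)
          have hby : b ≠ y := fun hh => hy (hh ▸ hb)
          rw [swz a hau ha, swz b hbu hb]
          rcases eq_or_ne a b with rfl | hab
          · rw [if_pos rfl, hloop a]
          · rw [if_neg hab, if_neg hax, if_neg hbx,
              if_neg (by rw [hTxz a hau hay, hTxz b hbu hby]; simp),
              hTab a b hau hax hay hbu hbx hby]
  -- (x, y) is a simple edge of T
  have hxyE : (x, y) ∈ T.simpleEdges := by
    simp only [Multigraph.simpleEdges, Finset.mem_filter, Finset.mem_product]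
    exact ⟨⟨by simp [hTverts], by simp [hTverts]⟩, hxy, hTxy⟩
  -- cardinality
  have hcard : T.verts.card = G.verts.card + 2 := by
    rw [hTverts, Finset.card_insert_of_notMem (by simp [hxy, hx]),
      Finset.card_insert_of_notMem hy]
  -- put everything together
  have key : Multigraph.indAux (G.verts.card + 1) (T.contractStar x)
      = Multigraph.indAux (G.verts.card + 1) G := by
    rw [Multigraph.indAux_agree _ hAgree, Multigraph.indAux_map]
  rw [Multigraph.ind, Multigraph.ind, hcard]
  have step : 1 + max (Multigraph.indAux (G.verts.card + 1) (T.contractStar x))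
        (Multigraph.indAux (G.verts.card + 1) (T.contractStar y))
      ≤ Multigraph.indAux (G.verts.card + 1 + 1) T := by
    have h := Finset.le_sup (s := T.simpleEdges)
      (f := fun p => 1 + max (Multigraph.indAux (G.verts.card + 1) (T.contractStar p.1))
        (Multigraph.indAux (G.verts.card + 1) (T.contractStar p.2))) hxyE
    simp only at h
    rw [← Multigraph.indAux_succ] at h
    exact h
  have mono : Multigraph.indAux G.verts.card G ≤ Multigraph.indAux (G.verts.card + 1) G :=
    Multigraph.indAux_mono (Nat.le_succ _) G
  have hle : Multigraph.indAux G.verts.card G + 1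
      ≤ 1 + max (Multigraph.indAux (G.verts.card + 1) (T.contractStar x))
        (Multigraph.indAux (G.verts.card + 1) (T.contractStar y)) := by
    have h1 : Multigraph.indAux (G.verts.card + 1) (T.contractStar x)
        ≤ max (Multigraph.indAux (G.verts.card + 1) (T.contractStar x))
          (Multigraph.indAux (G.verts.card + 1) (T.contractStar y)) := le_max_left _ _
    rw [key] at h1
    omega
  have : G.verts.card + 2 = G.verts.card + 1 + 1 := rfl
  rw [this]
  exact le_trans hle step
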